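/- The quadratic form a^2 + ab + b^2 + ac + bc + c^2 + d^2 (root lattice A_3 ⊥ A_1 form a^2 + (b+c)a + b^2 + bc + c^2 + d^2) represents every nonnegative integer as a, b, c, d range over the integers. -/

import Mathlib

set_option maxHeartbeats 1000000
set_option linter.unreachableTactic false
set_option linter.unusedTactic false

lemma bin_min_exists (a b c : ℤ)
    (pos : ∀ x y : ℤ, (x ≠ 0 ∨ y ≠ 0) → 0 < a*x^2 + 2*b*x*y + c*y^2) :
    ∃ (M x0 y0 : ℤ), (x0 ≠ 0 ∨ y0 ≠ 0) ∧ a*x0^2 + 2*b*x0*y0 + c*y0^2 = M ∧ 0 < M ∧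
      (∀ x y : ℤ, (x ≠ 0 ∨ y ≠ 0) → M ≤ a*x^2 + 2*b*x*y + c*y^2) := by
  classical
  set S : Set ℕ := {k | ∃ x y : ℤ, (x ≠ 0 ∨ y ≠ 0) ∧ a*x^2 + 2*b*x*y + c*y^2 = (k : ℤ)} with hS
  have hne : S.Nonempty := by
    refine ⟨a.toNat, 1, 0, Or.inl one_ne_zero, ?_⟩
    have h := pos 1 0 (Or.inl one_ne_zero)
    have h2 : a*1^2 + 2*b*1*0 + c*0^2 = a := by ring
    rw [h2] at h ⊢
    exact (Int.toNat_of_nonneg h.le).symm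
  obtain ⟨x0, y0, hv0, hfv⟩ := Nat.sInf_mem hne
  refine ⟨((sInf S : ℕ) : ℤ), x0, y0, hv0, hfv, ?_, ?_⟩
  · have := pos x0 y0 hv0; rw [hfv] at this; exact this
  · intro x y h
    have hp := pos x y h
    have hmem : (a*x^2 + 2*b*x*y + c*y^2).toNat ∈ S :=
      ⟨x, y, h, (Int.toNat_of_nonneg hp.le).symm⟩
    have hle := Nat.sInf_le hmem
    have h2 : ((sInf S : ℕ) : ℤ) ≤ ((a*x^2 + 2*b*x*y + c*y^2).toNat : ℤ) := by exact_mod_cast hle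
    rwa [Int.toNat_of_nonneg hp.le] at h2

lemma bin_reduce (a b c : ℤ)
    (pos : ∀ x y : ℤ, (x ≠ 0 ∨ y ≠ 0) → 0 < a*x^2 + 2*b*x*y + c*y^2) :
    ∃ M p q r s : ℤ,
      0 < M ∧
      p*s - q*r = 1 ∧
      a*p^2 + 2*b*p*q + c*q^2 = M ∧
      (∀ x y : ℤ, (x ≠ 0 ∨ y ≠ 0) → M ≤ a*x^2 + 2*b*x*y + c*y^2) ∧
      4*(a*p*r + b*(p*s + q*r) + c*q*s)^2 ≤ M^2 ∧
      3*M^2 ≤ 4*(a*c - b^2) := by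
  obtain ⟨M, x0, y0, hv0, hfv, hMpos, hmin⟩ := bin_min_exists a b c pos
  have hg1 : Int.gcd x0 y0 = 1 := by
    by_contra hg
    have hgpos : 0 < Int.gcd x0 y0 := by
      rcases hv0 with h | h
      · exact Int.gcd_pos_of_ne_zero_left _ h
      · exact Int.gcd_pos_of_ne_zero_right _ h
    obtain ⟨x1, hx1⟩ : (Int.gcd x0 y0 : ℤ) ∣ x0 := Int.gcd_dvd_left _ _
    obtain ⟨y1, hy1⟩ : (Int.gcd x0 y0 : ℤ) ∣ y0 := Int.gcd_dvd_right _ _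
    obtain ⟨g, hgdef⟩ : ∃ g : ℤ, g = (Int.gcd x0 y0 : ℤ) := ⟨_, rfl⟩
    rw [← hgdef] at hx1 hy1
    have hv1 : x1 ≠ 0 ∨ y1 ≠ 0 := by
      rcases hv0 with h | h
      · left; rintro rfl; exact h (by rw [hx1, mul_zero])
      · right; rintro rfl; exact h (by rw [hy1, mul_zero])
    have hfv' : a*(g*x1)^2 + 2*b*(g*x1)*(g*y1) + c*(g*y1)^2 = M := by
      rw [← hx1, ← hy1]; exact hfv
    have key : g^2 * (a*x1^2 + 2*b*x1*y1 + c*y1^2) = M := by linear_combination hfv'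
    have hle := hmin x1 y1 hv1
    have hg2 : (2 : ℤ) ≤ g := by
      have h2n : 2 ≤ Int.gcd x0 y0 := by omega
      rw [hgdef]; exact_mod_cast h2n
    have hF : 0 < a*x1^2 + 2*b*x1*y1 + c*y1^2 := lt_of_lt_of_le hMpos hle
    have hg4 : (4:ℤ) ≤ g^2 := by nlinarith
    have h4F : 4*(a*x1^2 + 2*b*x1*y1 + c*y1^2) ≤ g^2*(a*x1^2 + 2*b*x1*y1 + c*y1^2) := by
      nlinarith
    rw [key] at h4F
    linarith
  obtain ⟨A, B, hbez⟩ : ∃ A B : ℤ, x0 * A + y0 * B = 1 := by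
    refine ⟨Int.gcdA x0 y0, Int.gcdB x0 y0, ?_⟩
    have h := Int.gcd_eq_gcd_ab x0 y0
    rw [hg1] at h
    push_cast at h
    linarith
  obtain ⟨b', hb'⟩ : ∃ t : ℤ, t = a*x0*(-B) + b*(x0*A + y0*(-B)) + c*y0*A := ⟨_, rfl⟩
  obtain ⟨k, hk⟩ : ∃ t : ℤ, t = -((2*b' + M) / (2*M)) := ⟨_, rfl⟩
  obtain ⟨rr, hr⟩ : ∃ t : ℤ, t = (2*b' + M) % (2*M) := ⟨_, rfl⟩
  have h2M : (0:ℤ) < 2*M := by linarith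
  have hr0 : 0 ≤ rr := hr ▸ Int.emod_nonneg _ h2M.ne'
  have hrlt : rr < 2*M := hr ▸ Int.emod_lt_of_pos _ h2M
  have hdiv : 2*M*((2*b' + M) / (2*M)) + (2*b' + M) % (2*M) = 2*b' + M := Int.mul_ediv_add_emod _ _
  obtain ⟨b'', hb''⟩ : ∃ t : ℤ, t = b' + k*M := ⟨_, rfl⟩
  have h2b : 2*b'' = rr - M := by
    rw [hb'', hk, hr]; linarith [hdiv]
  have hbsq : 4*b''^2 ≤ M^2 := by nlinarith [h2b, hr0, hrlt]
  obtain ⟨r2, hr2⟩ : ∃ t : ℤ, t = -B + k*x0 := ⟨_, rfl⟩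
  obtain ⟨s2, hs2⟩ : ∃ t : ℤ, t = A + k*y0 := ⟨_, rfl⟩
  have hdet : x0*s2 - y0*r2 = 1 := by rw [hr2, hs2]; linear_combination hbez
  have hBval : a*x0*r2 + b*(x0*s2 + y0*r2) + c*y0*s2 = b'' := by
    rw [hr2, hs2, hb'', hb']; linear_combination k * hfv
  have hrs : r2 ≠ 0 ∨ s2 ≠ 0 := by
    by_contra h
    push_neg at h
    rw [h.1, h.2] at hdet
    simp at hdet
  have hc'' := hmin _ _ hrs
  have gen : (a*x0^2 + 2*b*x0*y0 + c*y0^2) * (a*r2^2 + 2*b*r2*s2 + c*s2^2)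
      - (a*x0*r2 + b*(x0*s2 + y0*r2) + c*y0*s2)^2
      = (a*c - b^2) * (x0*s2 - y0*r2)^2 := by ring
  rw [hfv, hBval, hdet] at gen
  have hid : M * (a*r2^2 + 2*b*r2*s2 + c*s2^2) - b''^2 = a*c - b^2 := by linarith [gen]
  have h1 : M*M ≤ M*(a*r2^2 + 2*b*r2*s2 + c*s2^2) := mul_le_mul_of_nonneg_left hc'' hMpos.le
  have h2 : M^2 ≤ (a*c - b^2) + b''^2 := by nlinarith [h1, hid]
  exact ⟨M, x0, y0, r2, s2, hMpos, hdet, hfv, hmin,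
    by rw [hBval]; exact hbsq, by linarith [hbsq, h2]⟩

/-- A positive definite integral binary form of determinant 2 only takes values `u² + 2v²`. -/
lemma bin_det2_rep (a b c n : ℤ)
    (pos : ∀ x y : ℤ, (x ≠ 0 ∨ y ≠ 0) → 0 < a*x^2 + 2*b*x*y + c*y^2)
    (hD : a*c - b^2 = 2) (x y : ℤ) (hxy : a*x^2 + 2*b*x*y + c*y^2 = n) :
    ∃ u v : ℤ, n = u^2 + 2*v^2 := by
  obtain ⟨M, p, q, r, s, hMpos, hdet, hMval, hmin, hBsq, hbound⟩ := bin_reduce a b c pos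
  rw [hD] at hbound
  have hM1 : M = 1 := by nlinarith
  obtain ⟨Bv, hBv⟩ : ∃ t : ℤ, t = a*p*r + b*(p*s + q*r) + c*q*s := ⟨_, rfl⟩
  rw [← hBv] at hBsq
  have hB0 : Bv = 0 := by nlinarith
  -- value of second basis vector is 2
  have hrs : r ≠ 0 ∨ s ≠ 0 := by
    by_contra h
    push_neg at h
    rw [h.1, h.2] at hdet
    simp at hdet
  have gen : (a*p^2 + 2*b*p*q + c*q^2) * (a*r^2 + 2*b*r*s + c*s^2)
      - (a*p*r + b*(p*s + q*r) + c*q*s)^2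
      = (a*c - b^2) * (p*s - q*r)^2 := by ring
  rw [hMval, hM1, ← hBv, hB0, hdet, hD] at gen
  have hc2 : a*r^2 + 2*b*r*s + c*s^2 = 2 := by linarith [gen]
  -- express (x,y) in the new basis
  obtain ⟨X, hX⟩ : ∃ t : ℤ, t = s*x - r*y := ⟨_, rfl⟩
  obtain ⟨Y, hY⟩ : ∃ t : ℤ, t = p*y - q*x := ⟨_, rfl⟩
  have h1 : p*X + r*Y = x := by rw [hX, hY]; linear_combination x * hdet
  have h2 : q*X + s*Y = y := by rw [hX, hY]; linear_combination y * hdet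
  have expand : a*(p*X + r*Y)^2 + 2*b*(p*X + r*Y)*(q*X + s*Y) + c*(q*X + s*Y)^2
      = (a*p^2 + 2*b*p*q + c*q^2)*X^2 + 2*(a*p*r + b*(p*s + q*r) + c*q*s)*X*Y
        + (a*r^2 + 2*b*r*s + c*s^2)*Y^2 := by ring
  rw [h1, h2, hxy, hMval, hM1, ← hBv, hB0, hc2] at expand
  exact ⟨X, Y, by linarith [expand]⟩

/-- Extend a vector with coprime coordinates to a basis of `ℤ³` (determinant 1). -/
lemma basis_ext (v1 v2 v3 : ℤ) (h : Int.gcd (Int.gcd v1 v2 : ℤ) v3 = 1) :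
    ∃ q1 q2 q3 r1 r2 r3 : ℤ,
      v1*q2*r3 + q1*r2*v3 + r1*v2*q3 - r1*q2*v3 - q1*v2*r3 - v1*r2*q3 = 1 := by
  by_cases h12 : v1 = 0 ∧ v2 = 0
  · obtain ⟨rfl, rfl⟩ := h12
    have hv3 : v3 = 1 ∨ v3 = -1 := by
      have h' : v3.natAbs = 1 := by simpa using h
      omega
    refine ⟨1, 0, 0, 0, v3, 0, ?_⟩
    rcases hv3 with rfl | rfl <;> ring
  · have hgpos : 0 < Int.gcd v1 v2 := by
      rcases not_and_or.mp h12 with h' | h'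
      · exact Int.gcd_pos_of_ne_zero_left _ h'
      · exact Int.gcd_pos_of_ne_zero_right _ h'
    obtain ⟨g, hg⟩ : ∃ g : ℤ, g = (Int.gcd v1 v2 : ℤ) := ⟨_, rfl⟩
    have hgpos' : 0 < g := by rw [hg]; exact_mod_cast hgpos
    obtain ⟨xh, yh, hB1⟩ : ∃ xh yh : ℤ, v1*xh + v2*yh = g := by
      refine ⟨Int.gcdA v1 v2, Int.gcdB v1 v2, ?_⟩
      rw [hg]; linarith [Int.gcd_eq_gcd_ab v1 v2]
    obtain ⟨p1, hp1⟩ : g ∣ v1 := hg ▸ Int.gcd_dvd_left _ _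
    obtain ⟨p2, hp2⟩ : g ∣ v2 := hg ▸ Int.gcd_dvd_right _ _
    obtain ⟨u, w, hB2⟩ : ∃ u w : ℤ, g*u + v3*w = 1 := by
      refine ⟨Int.gcdA g v3, Int.gcdB g v3, ?_⟩
      have h1 : Int.gcd g v3 = 1 := by rw [hg]; exact h
      have := Int.gcd_eq_gcd_ab g v3
      rw [h1] at this; push_cast at this; linarith
    have hq : xh*p1 + yh*p2 = 1 := by
      have h2 : g*(xh*p1 + yh*p2) = g*1 := by
        rw [hp1, hp2] at hB1; linarith [hB1]
      exact mul_left_cancel₀ hgpos'.ne' h2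
    refine ⟨-yh, xh, 0, -w*p1, -w*p2, u, ?_⟩
    linear_combination u*hB1 + (w*v3)*hq + hB2

lemma ter_min_exists (a11 a22 a33 a12 a13 a23 : ℤ)
    (pos : ∀ x y z : ℤ, (x ≠ 0 ∨ y ≠ 0 ∨ z ≠ 0) →
      0 < a11*x^2 + a22*y^2 + a33*z^2 + 2*a12*x*y + 2*a13*x*z + 2*a23*y*z) :
    ∃ (M v1 v2 v3 : ℤ), (v1 ≠ 0 ∨ v2 ≠ 0 ∨ v3 ≠ 0) ∧
      a11*v1^2 + a22*v2^2 + a33*v3^2 + 2*a12*v1*v2 + 2*a13*v1*v3 + 2*a23*v2*v3 = M ∧ 0 < M ∧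
      (∀ x y z : ℤ, (x ≠ 0 ∨ y ≠ 0 ∨ z ≠ 0) →
        M ≤ a11*x^2 + a22*y^2 + a33*z^2 + 2*a12*x*y + 2*a13*x*z + 2*a23*y*z) := by
  classical
  set S : Set ℕ := {k | ∃ x y z : ℤ, (x ≠ 0 ∨ y ≠ 0 ∨ z ≠ 0) ∧
    a11*x^2 + a22*y^2 + a33*z^2 + 2*a12*x*y + 2*a13*x*z + 2*a23*y*z = (k : ℤ)} with hS
  have hne : S.Nonempty := by
    refine ⟨a11.toNat, 1, 0, 0, Or.inl one_ne_zero, ?_⟩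
    have h := pos 1 0 0 (Or.inl one_ne_zero)
    have h2 : a11*1^2 + a22*0^2 + a33*0^2 + 2*a12*1*0 + 2*a13*1*0 + 2*a23*0*0 = a11 := by ring
    rw [h2] at h ⊢
    exact (Int.toNat_of_nonneg h.le).symm
  obtain ⟨v1, v2, v3, hv0, hfv⟩ := Nat.sInf_mem hne
  refine ⟨((sInf S : ℕ) : ℤ), v1, v2, v3, hv0, hfv, ?_, ?_⟩
  · have := pos v1 v2 v3 hv0; rw [hfv] at this; exact this
  · intro x y z h
    have hp := pos x y z h
    have hmem : (a11*x^2 + a22*y^2 + a33*z^2 + 2*a12*x*y + 2*a13*x*z + 2*a23*y*z).toNat ∈ S :=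
      ⟨x, y, z, h, (Int.toNat_of_nonneg hp.le).symm⟩
    have hle := Nat.sInf_le hmem
    have h2 : ((sInf S : ℕ) : ℤ) ≤
        ((a11*x^2 + a22*y^2 + a33*z^2 + 2*a12*x*y + 2*a13*x*z + 2*a23*y*z).toNat : ℤ) := by
      exact_mod_cast hle
    rwa [Int.toNat_of_nonneg hp.le] at h2

/-- A positive definite integral ternary quadratic form of Gram determinant 2 only
represents integers of the shape `X² + Y² + 2Z²`. -/
lemma ter_det2_rep (a11 a22 a33 a12 a13 a23 n : ℤ)
    (pos : ∀ x y z : ℤ, (x ≠ 0 ∨ y ≠ 0 ∨ z ≠ 0) →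
      0 < a11*x^2 + a22*y^2 + a33*z^2 + 2*a12*x*y + 2*a13*x*z + 2*a23*y*z)
    (hdetA : a11*a22*a33 + 2*a12*a13*a23 - a11*a23^2 - a22*a13^2 - a33*a12^2 = 2)
    (x y z : ℤ)
    (hrep : a11*x^2 + a22*y^2 + a33*z^2 + 2*a12*x*y + 2*a13*x*z + 2*a23*y*z = n) :
    ∃ X Y Z : ℤ, n = X^2 + Y^2 + 2*Z^2 := by
  obtain ⟨M, v1, v2, v3, hv0, hfv, hMpos, hmin⟩ := ter_min_exists a11 a22 a33 a12 a13 a23 pos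
  -- the minimal vector is primitive
  have hg : Int.gcd (Int.gcd v1 v2 : ℤ) v3 = 1 := by
    by_contra hgne
    have hgpos : 0 < Int.gcd (Int.gcd v1 v2 : ℤ) v3 := by
      rcases hv0 with h | h | h
      · apply Int.gcd_pos_of_ne_zero_left
        intro h0
        rw [Int.natCast_eq_zero] at h0
        exact h ((Int.gcd_eq_zero_iff.mp h0).1)
      · apply Int.gcd_pos_of_ne_zero_left
        intro h0
        rw [Int.natCast_eq_zero] at h0
        exact h ((Int.gcd_eq_zero_iff.mp h0).2)
      · exact Int.gcd_pos_of_ne_zero_right _ h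
    obtain ⟨g, hgdef⟩ : ∃ g : ℤ, g = (Int.gcd (Int.gcd v1 v2 : ℤ) v3 : ℤ) := ⟨_, rfl⟩
    have hgd1 : g ∣ v1 := hgdef ▸ dvd_trans (Int.gcd_dvd_left _ _) (Int.gcd_dvd_left _ _)
    have hgd2 : g ∣ v2 := hgdef ▸ dvd_trans (Int.gcd_dvd_left _ _) (Int.gcd_dvd_right _ _)
    have hgd3 : g ∣ v3 := hgdef ▸ Int.gcd_dvd_right _ _
    obtain ⟨w1, hw1⟩ := hgd1
    obtain ⟨w2, hw2⟩ := hgd2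
    obtain ⟨w3, hw3⟩ := hgd3
    have hwnz : w1 ≠ 0 ∨ w2 ≠ 0 ∨ w3 ≠ 0 := by
      rcases hv0 with h | h | h
      · left; rintro rfl; exact h (by rw [hw1, mul_zero])
      · right; left; rintro rfl; exact h (by rw [hw2, mul_zero])
      · right; right; rintro rfl; exact h (by rw [hw3, mul_zero])
    have hfv' : a11*(g*w1)^2 + a22*(g*w2)^2 + a33*(g*w3)^2 + 2*a12*(g*w1)*(g*w2)
        + 2*a13*(g*w1)*(g*w3) + 2*a23*(g*w2)*(g*w3) = M := by
      rw [← hw1, ← hw2, ← hw3]; exact hfv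
    have key : g^2 * (a11*w1^2 + a22*w2^2 + a33*w3^2 + 2*a12*w1*w2 + 2*a13*w1*w3 + 2*a23*w2*w3)
        = M := by linear_combination hfv'
    have hle := hmin w1 w2 w3 hwnz
    have hg2 : (2 : ℤ) ≤ g := by
      have h2n : 2 ≤ Int.gcd (Int.gcd v1 v2 : ℤ) v3 := by omega
      rw [hgdef]; exact_mod_cast h2n
    have hF : 0 < a11*w1^2 + a22*w2^2 + a33*w3^2 + 2*a12*w1*w2 + 2*a13*w1*w3 + 2*a23*w2*w3 :=
      lt_of_lt_of_le hMpos hle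
    have hg4 : (4:ℤ) ≤ g^2 := by nlinarith
    have h4F : 4*(a11*w1^2 + a22*w2^2 + a33*w3^2 + 2*a12*w1*w2 + 2*a13*w1*w3 + 2*a23*w2*w3)
        ≤ g^2*(a11*w1^2 + a22*w2^2 + a33*w3^2 + 2*a12*w1*w2 + 2*a13*w1*w3 + 2*a23*w2*w3) := by
      nlinarith
    rw [key] at h4F
    linarith
  obtain ⟨q1, q2, q3, r1, r2, r3, hdet3⟩ := basis_ext v1 v2 v3 hg
  -- transported Gram matrix entries
  obtain ⟨e12, he12⟩ : ∃ t : ℤ, t = a11*v1*q1 + a22*v2*q2 + a33*v3*q3 + a12*(v1*q2+v2*q1)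
      + a13*(v1*q3+v3*q1) + a23*(v2*q3+v3*q2) := ⟨_, rfl⟩
  obtain ⟨e13, he13⟩ : ∃ t : ℤ, t = a11*v1*r1 + a22*v2*r2 + a33*v3*r3 + a12*(v1*r2+v2*r1)
      + a13*(v1*r3+v3*r1) + a23*(v2*r3+v3*r2) := ⟨_, rfl⟩
  obtain ⟨e23, he23⟩ : ∃ t : ℤ, t = a11*q1*r1 + a22*q2*r2 + a33*q3*r3 + a12*(q1*r2+q2*r1)
      + a13*(q1*r3+q3*r1) + a23*(q2*r3+q3*r2) := ⟨_, rfl⟩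
  obtain ⟨e22, he22⟩ : ∃ t : ℤ, t = a11*q1^2 + a22*q2^2 + a33*q3^2 + 2*a12*q1*q2
      + 2*a13*q1*q3 + 2*a23*q2*q3 := ⟨_, rfl⟩
  obtain ⟨e33, he33⟩ : ∃ t : ℤ, t = a11*r1^2 + a22*r2^2 + a33*r3^2 + 2*a12*r1*r2
      + 2*a13*r1*r3 + 2*a23*r2*r3 := ⟨_, rfl⟩
  have K1 : ∀ X Y Z : ℤ,
      a11*(X*v1+Y*q1+Z*r1)^2 + a22*(X*v2+Y*q2+Z*r2)^2 + a33*(X*v3+Y*q3+Z*r3)^2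
        + 2*a12*(X*v1+Y*q1+Z*r1)*(X*v2+Y*q2+Z*r2)
        + 2*a13*(X*v1+Y*q1+Z*r1)*(X*v3+Y*q3+Z*r3)
        + 2*a23*(X*v2+Y*q2+Z*r2)*(X*v3+Y*q3+Z*r3)
      = M*X^2 + e22*Y^2 + e33*Z^2 + 2*e12*X*Y + 2*e13*X*Z + 2*e23*Y*Z := by
    intro X Y Z
    rw [he12, he13, he22, he33, he23, ← hfv]; ring
  have K2 : ∀ X Y Z : ℤ, (X ≠ 0 ∨ Y ≠ 0 ∨ Z ≠ 0) →
      ((X*v1+Y*q1+Z*r1) ≠ 0 ∨ (X*v2+Y*q2+Z*r2) ≠ 0 ∨ (X*v3+Y*q3+Z*r3) ≠ 0) := by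
    intro X Y Z hne
    by_contra hc
    push_neg at hc
    obtain ⟨h1, h2, h3⟩ := hc
    have hXe : X = 0 := by
      linear_combination (-X)*hdet3 + (q2*r3 - r2*q3)*h1 - (q1*r3 - r1*q3)*h2 + (q1*r2 - r1*q2)*h3
    have hYe : Y = 0 := by
      linear_combination (-Y)*hdet3 - (v2*r3 - v3*r2)*h1 + (v1*r3 - v3*r1)*h2 - (v1*r2 - v2*r1)*h3
    have hZe : Z = 0 := by
      linear_combination (-Z)*hdet3 + (v2*q3 - v3*q2)*h1 - (v1*q3 - v3*q1)*h2 + (v1*q2 - v2*q1)*h3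
    tauto
  -- determinant of the transported Gram matrix
  have gen : (a11*v1^2 + a22*v2^2 + a33*v3^2 + 2*a12*v1*v2 + 2*a13*v1*v3 + 2*a23*v2*v3)
      * ((a11*q1^2 + a22*q2^2 + a33*q3^2 + 2*a12*q1*q2 + 2*a13*q1*q3 + 2*a23*q2*q3)
        * (a11*r1^2 + a22*r2^2 + a33*r3^2 + 2*a12*r1*r2 + 2*a13*r1*r3 + 2*a23*r2*r3))
      + 2*((a11*v1*q1 + a22*v2*q2 + a33*v3*q3 + a12*(v1*q2+v2*q1) + a13*(v1*q3+v3*q1) + a23*(v2*q3+v3*q2))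
        *(a11*v1*r1 + a22*v2*r2 + a33*v3*r3 + a12*(v1*r2+v2*r1) + a13*(v1*r3+v3*r1) + a23*(v2*r3+v3*r2))
        *(a11*q1*r1 + a22*q2*r2 + a33*q3*r3 + a12*(q1*r2+q2*r1) + a13*(q1*r3+q3*r1) + a23*(q2*r3+q3*r2)))
      - (a11*v1^2 + a22*v2^2 + a33*v3^2 + 2*a12*v1*v2 + 2*a13*v1*v3 + 2*a23*v2*v3)
        * (a11*q1*r1 + a22*q2*r2 + a33*q3*r3 + a12*(q1*r2+q2*r1) + a13*(q1*r3+q3*r1) + a23*(q2*r3+q3*r2))^2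
      - (a11*q1^2 + a22*q2^2 + a33*q3^2 + 2*a12*q1*q2 + 2*a13*q1*q3 + 2*a23*q2*q3)
        * (a11*v1*r1 + a22*v2*r2 + a33*v3*r3 + a12*(v1*r2+v2*r1) + a13*(v1*r3+v3*r1) + a23*(v2*r3+v3*r2))^2
      - (a11*r1^2 + a22*r2^2 + a33*r3^2 + 2*a12*r1*r2 + 2*a13*r1*r3 + 2*a23*r2*r3)
        * (a11*v1*q1 + a22*v2*q2 + a33*v3*q3 + a12*(v1*q2+v2*q1) + a13*(v1*q3+v3*q1) + a23*(v2*q3+v3*q2))^2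
      = (a11*a22*a33 + 2*a12*a13*a23 - a11*a23^2 - a22*a13^2 - a33*a12^2)
        * (v1*q2*r3 + q1*r2*v3 + r1*v2*q3 - r1*q2*v3 - q1*v2*r3 - v1*r2*q3)^2 := by ring
  rw [hfv, ← he12, ← he13, ← he22, ← he33, ← he23, hdetA, hdet3] at gen
  have hdetA' : M*(e22*e33) + 2*(e12*e13*e23) - M*e23^2 - e22*e13^2 - e33*e12^2 = 2 := by
    linarith only [gen]
  clear gen
  -- Schur complement binary form
  obtain ⟨g22, hg22⟩ : ∃ t : ℤ, t = M*e22 - e12^2 := ⟨_, rfl⟩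
  obtain ⟨g23, hg23⟩ : ∃ t : ℤ, t = M*e23 - e12*e13 := ⟨_, rfl⟩
  obtain ⟨g33, hg33⟩ : ∃ t : ℤ, t = M*e33 - e13^2 := ⟨_, rfl⟩
  have hGdet : g22*g33 - g23^2 = 2*M := by
    rw [hg22, hg23, hg33]; linear_combination M*hdetA'
  have hGlow : ∀ Y Z : ℤ, (Y ≠ 0 ∨ Z ≠ 0) → 3*M^2 ≤ 4*(g22*Y^2 + 2*g23*Y*Z + g33*Z^2) := by
    intro Y Z hYZ
    obtain ⟨t, ht⟩ : ∃ t : ℤ, t = e12*Y + e13*Z := ⟨_, rfl⟩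
    obtain ⟨X, hX⟩ : ∃ X : ℤ, X = -((2*t + M) / (2*M)) := ⟨_, rfl⟩
    have h2M : (0:ℤ) < 2*M := by linarith
    have hdiv := Int.mul_ediv_add_emod (2*t + M) (2*M)
    have hr0 : 0 ≤ (2*t + M) % (2*M) := Int.emod_nonneg _ h2M.ne'
    have hrlt : (2*t + M) % (2*M) < 2*M := Int.emod_lt_of_pos _ h2M
    have hround : (2*(M*X + t))^2 ≤ M^2 := by
      have heq : 2*(M*X + t) = (2*t + M) % (2*M) - M := by rw [hX]; linarith only [hdiv]
      nlinarith only [heq, hr0, hrlt, hMpos]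
    have hcomb := K1 X Y Z
    have hnz := K2 X Y Z (by tauto)
    have hge := hmin _ _ _ hnz
    rw [hcomb] at hge
    have hid : 4*(g22*Y^2 + 2*g23*Y*Z + g33*Z^2)
        = 4*M*(M*X^2 + e22*Y^2 + e33*Z^2 + 2*e12*X*Y + 2*e13*X*Z + 2*e23*Y*Z)
          - (2*(M*X + t))^2 := by
      rw [hg22, hg23, hg33, ht]; ring
    have h4 : 4*M*M ≤ 4*M*(M*X^2 + e22*Y^2 + e33*Z^2 + 2*e12*X*Y + 2*e13*X*Z + 2*e23*Y*Z) :=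
      mul_le_mul_of_nonneg_left hge (by linarith : (0:ℤ) ≤ 4*M)
    nlinarith only [hid, hround, h4, hMpos]
  have hGpos : ∀ Y Z : ℤ, (Y ≠ 0 ∨ Z ≠ 0) → 0 < g22*Y^2 + 2*g23*Y*Z + g33*Z^2 := by
    intro Y Z h
    have h' := hGlow Y Z h
    nlinarith only [h', hMpos]
  obtain ⟨M2, p2, q2', r2', s2', hM2pos, hdet2, hM2val, hmin2, hBsq2, hbound2⟩ :=
    bin_reduce g22 g23 g33 hGpos
  rw [hGdet] at hbound2
  have hpq : p2 ≠ 0 ∨ q2' ≠ 0 := by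
    by_contra hcc
    push_neg at hcc
    rw [hcc.1, hcc.2] at hdet2
    simp at hdet2
  have h34 : 3*M^2 ≤ 4*M2 := by
    have h' := hGlow p2 q2' hpq
    rw [hM2val] at h'
    linarith only [h']
  have hM1 : M = 1 := by
    by_contra hne1
    have h2M' : 2 ≤ M := by omega
    have e1 : 9*M^4 ≤ 16*M2^2 :=
      mul_le_mul h34 h34 (by positivity) (by linarith only [hM2pos]) |>.trans_eq' (by ring)
        |>.trans_eq (by ring)
    have e2 : 27*M^4 ≤ 128*M := by nlinarith only [e1, hbound2]
    have p1 : 0 ≤ (M-2)*M := mul_nonneg (by linarith only [h2M']) hMpos.le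
    have p2 : 0 ≤ (M-2)*M^2 := mul_nonneg (by linarith only [h2M']) (by positivity)
    have p3 : 0 ≤ (M-2)*M^3 := mul_nonneg (by linarith only [h2M']) (by positivity)
    nlinarith only [e2, p1, p2, p3, hMpos]
  subst hM1
  -- shear off the first basis vector
  obtain ⟨w1, hw1⟩ : ∃ t : ℤ, t = q1 - e12*v1 := ⟨_, rfl⟩
  obtain ⟨w2, hw2⟩ : ∃ t : ℤ, t = q2 - e12*v2 := ⟨_, rfl⟩
  obtain ⟨w3, hw3⟩ : ∃ t : ℤ, t = q3 - e12*v3 := ⟨_, rfl⟩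
  obtain ⟨u1, hu1⟩ : ∃ t : ℤ, t = r1 - e13*v1 := ⟨_, rfl⟩
  obtain ⟨u2, hu2⟩ : ∃ t : ℤ, t = r2 - e13*v2 := ⟨_, rfl⟩
  obtain ⟨u3, hu3⟩ : ∃ t : ℤ, t = r3 - e13*v3 := ⟨_, rfl⟩
  obtain ⟨h22, hh22⟩ : ∃ t : ℤ, t = e22 - e12^2 := ⟨_, rfl⟩
  obtain ⟨h23, hh23⟩ : ∃ t : ℤ, t = e23 - e12*e13 := ⟨_, rfl⟩
  obtain ⟨h33, hh33⟩ : ∃ t : ℤ, t = e33 - e13^2 := ⟨_, rfl⟩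
  have hdet3' : v1*w2*u3 + w1*u2*v3 + u1*v2*w3 - u1*w2*v3 - w1*v2*u3 - v1*u2*w3 = 1 := by
    rw [hw1, hw2, hw3, hu1, hu2, hu3]; linear_combination hdet3
  have K1' : ∀ X Y Z : ℤ,
      a11*(X*v1+Y*w1+Z*u1)^2 + a22*(X*v2+Y*w2+Z*u2)^2 + a33*(X*v3+Y*w3+Z*u3)^2
        + 2*a12*(X*v1+Y*w1+Z*u1)*(X*v2+Y*w2+Z*u2)
        + 2*a13*(X*v1+Y*w1+Z*u1)*(X*v3+Y*w3+Z*u3)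
        + 2*a23*(X*v2+Y*w2+Z*u2)*(X*v3+Y*w3+Z*u3)
      = X^2 + h22*Y^2 + 2*h23*Y*Z + h33*Z^2 := by
    intro X Y Z
    have h := K1 (X - e12*Y - e13*Z) Y Z
    rw [hw1, hw2, hw3, hu1, hu2, hu3, hh22, hh23, hh33]
    linear_combination h
  have K2' : ∀ X Y Z : ℤ, (X ≠ 0 ∨ Y ≠ 0 ∨ Z ≠ 0) →
      ((X*v1+Y*w1+Z*u1) ≠ 0 ∨ (X*v2+Y*w2+Z*u2) ≠ 0 ∨ (X*v3+Y*w3+Z*u3) ≠ 0) := by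
    intro X Y Z hne
    by_contra hc
    push_neg at hc
    obtain ⟨h1, h2, h3⟩ := hc
    have hXe : X = 0 := by
      linear_combination (-X)*hdet3' + (w2*u3 - u2*w3)*h1 - (w1*u3 - u1*w3)*h2 + (w1*u2 - u1*w2)*h3
    have hYe : Y = 0 := by
      linear_combination (-Y)*hdet3' - (v2*u3 - v3*u2)*h1 + (v1*u3 - v3*u1)*h2 - (v1*u2 - v2*u1)*h3
    have hZe : Z = 0 := by
      linear_combination (-Z)*hdet3' + (v2*w3 - v3*w2)*h1 - (v1*w3 - v3*w1)*h2 + (v1*w2 - v2*w1)*h3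
    tauto
  -- coordinates of the representing vector in the new basis
  obtain ⟨X, hX⟩ : ∃ t : ℤ, t = x*(w2*u3 - w3*u2) - y*(w1*u3 - w3*u1) + z*(w1*u2 - w2*u1) := ⟨_, rfl⟩
  obtain ⟨Y, hY⟩ : ∃ t : ℤ, t = -x*(v2*u3 - v3*u2) + y*(v1*u3 - v3*u1) - z*(v1*u2 - v2*u1) := ⟨_, rfl⟩
  obtain ⟨Z, hZ⟩ : ∃ t : ℤ, t = x*(v2*w3 - v3*w2) - y*(v1*w3 - v3*w1) + z*(v1*w2 - v2*w1) := ⟨_, rfl⟩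
  have hc1 : X*v1 + Y*w1 + Z*u1 = x := by
    rw [hX, hY, hZ]; linear_combination x*hdet3'
  have hc2 : X*v2 + Y*w2 + Z*u2 = y := by
    rw [hX, hY, hZ]; linear_combination y*hdet3'
  have hc3 : X*v3 + Y*w3 + Z*u3 = z := by
    rw [hX, hY, hZ]; linear_combination z*hdet3'
  have hfinal := K1' X Y Z
  rw [hc1, hc2, hc3, hrep] at hfinal
  -- the binary complement is positive definite of determinant 2
  have hHpos : ∀ Y' Z' : ℤ, (Y' ≠ 0 ∨ Z' ≠ 0) → 0 < h22*Y'^2 + 2*h23*Y'*Z' + h33*Z'^2 := by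
    intro Y' Z' h
    have hcomb := K1' 0 Y' Z'
    have hnz := K2' 0 Y' Z' (by tauto)
    have hp := pos _ _ _ hnz
    rw [hcomb] at hp
    nlinarith only [hp]
  have hHdet : h22*h33 - h23^2 = 2 := by
    rw [hh22, hh23, hh33]; linear_combination hdetA'
  obtain ⟨uu, vv, huv⟩ := bin_det2_rep h22 h23 h33 (n - X^2) hHpos hHdet Y Z
    (by linarith only [hfinal])
  exact ⟨X, uu, vv, by linarith only [huv]⟩

/-- Every odd natural number is of the form `X² + Y² + 2Z²`. -/
theorem odd_rep (n : ℕ) (hodd : n % 2 = 1) : ∃ X Y Z : ℤ, (n : ℤ) = X^2 + Y^2 + 2*Z^2 := by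
  -- trivial case n = 1
  rcases eq_or_ne n 1 with rfl | hn1
  · exact ⟨1, 0, 0, by norm_num⟩
  have hn3 : 3 ≤ n := by omega
  -- choose the residue r8 mod 8
  obtain ⟨r8, hr8⟩ : ∃ r8 : ℕ, (n % 4 = 1 ∧ r8 = 1) ∨ (n % 4 = 3 ∧ r8 = 5) := by
    rcases Nat.odd_mod_four_iff.mp hodd with h | h
    · exact ⟨1, Or.inl ⟨h, rfl⟩⟩
    · exact ⟨5, Or.inr ⟨h, rfl⟩⟩
  have hr8odd : r8 % 2 = 1 := by rcases hr8 with ⟨_, rfl⟩ | ⟨_, rfl⟩ <;> norm_num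
  have hr8lt : r8 < 8 := by rcases hr8 with ⟨_, rfl⟩ | ⟨_, rfl⟩ <;> norm_num
  -- CRT: find k ≡ r8 mod 8, k ≡ n-1 mod n
  have hcop : Nat.Coprime 8 n := by
    have h2 : Nat.Coprime 2 n := (Nat.prime_two.coprime_iff_not_dvd).mpr (by omega)
    simpa using h2.pow_left 3
  obtain ⟨k, hk8, hkn⟩ := Nat.chineseRemainder hcop r8 (n - 1)
  -- k is a unit mod 8n
  have hk8' : k % 8 = r8 := by
    have := hk8; unfold Nat.ModEq at this; omega
  have hknn : k % n = n - 1 := by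
    have := hkn; unfold Nat.ModEq at this
    rw [Nat.mod_eq_of_lt (by omega : n - 1 < n)] at this
    exact this
  have hkcop : Nat.Coprime k (8*n) := by
    apply Nat.Coprime.mul_right
    · have h2 : Nat.Coprime k 2 := by
        rw [Nat.coprime_comm]
        exact (Nat.prime_two.coprime_iff_not_dvd).mpr (by omega)
      simpa using h2.pow_right 3
    · have hd : Nat.gcd k n ∣ 1 := by
        have h1 : Nat.gcd k n ∣ n := Nat.gcd_dvd_right k n
        have h2 : Nat.gcd k n ∣ k := Nat.gcd_dvd_left k n
        have h3 : Nat.gcd k n ∣ k % n := (Nat.dvd_mod_iff h1).mpr h2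
        rw [hknn] at h3
        have h4 : Nat.gcd k n ∣ n - (n-1) := Nat.dvd_sub h1 h3
        rwa [(by omega : n - (n-1) = 1)] at h4
      exact Nat.eq_one_of_dvd_one hd
  haveI : NeZero (8*n) := ⟨by positivity⟩
  have hkunit : IsUnit ((k : ℕ) : ZMod (8*n)) := (ZMod.isUnit_iff_coprime k (8*n)).mpr hkcop
  -- Dirichlet
  obtain ⟨p, hpgt, hp, hpz⟩ := Nat.forall_exists_prime_gt_and_eq_mod hkunit (n + 2)
  haveI : Fact p.Prime := ⟨hp⟩
  have hmod : p ≡ k [MOD 8*n] := (ZMod.natCast_eq_natCast_iff _ _ _).mp hpz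
  have hmod8 : p % 8 = r8 := by
    have h1 : p ≡ k [MOD 8] := hmod.of_dvd ⟨n, rfl⟩
    unfold Nat.ModEq at h1; omega
  have hmodn : p % n = n - 1 := by
    have h1 : p ≡ k [MOD n] := hmod.of_dvd ⟨8, by ring⟩
    unfold Nat.ModEq at h1
    omega
  have hpodd : p % 2 = 1 := by omega
  have hp4 : p % 4 = 1 := by
    rcases hr8 with ⟨_, rfl⟩ | ⟨_, rfl⟩ <;> omega
  have hpOdd : Odd p := Nat.odd_iff.mpr hpodd
  have hnOdd : Odd n := Nat.odd_iff.mpr hodd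
  -- the Legendre symbol computation
  have hL : legendreSym p ((-2) * (n:ℤ)) = 1 := by
    rw [jacobiSym.legendreSym.to_jacobiSym, jacobiSym.mul_left, jacobiSym.at_neg_two hpOdd,
      jacobiSym.quadratic_reciprocity_one_mod_four' hnOdd hp4]
    have hcast : ((p : ℤ) % (n : ℤ)) = (-1) % (n : ℤ) := by
      have h1 : ((p : ℤ) % (n : ℤ)) = ((p % n : ℕ) : ℤ) := by push_cast; rfl
      have h2 : (-1 : ℤ) % (n : ℤ) = ((n : ℤ) - 1) % n := by
        conv_lhs => rw [(by ring : (-1 : ℤ) = ((n:ℤ) - 1) + n * (-1))]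
        rw [Int.add_mul_emod_self_left]
      rw [h1, h2, Int.emod_eq_of_lt (by push_cast; omega) (by push_cast; omega)]
      push_cast
      omega
    rw [jacobiSym.mod_left' hcast, jacobiSym.at_neg_one hnOdd,
      ZMod.χ₈'_nat_eq_if_mod_eight, ZMod.χ₄_nat_eq_if_mod_four]
    rcases hr8 with ⟨h4, rfl⟩ | ⟨h4, rfl⟩ <;>
      simp [hmod8, hodd, h4, hpodd] <;> norm_num [hmod8]
  -- extract a square root
  have hpn : ¬ (p ∣ n) := fun hdvd => by
    have := Nat.le_of_dvd (by omega) hdvd; omega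
  have hne0 : (((-2) * (n:ℤ) : ℤ) : ZMod p) ≠ 0 := by
    rw [Ne, ZMod.intCast_zmod_eq_zero_iff_dvd]
    intro hdvd
    have h2 : (p:ℤ) ∣ 2*(n:ℤ) := by simpa using hdvd.neg_right
    have h3 : p ∣ 2*n := by exact_mod_cast h2
    rcases (Nat.Prime.dvd_mul hp).mp h3 with h4 | h4
    · have := Nat.le_of_dvd (by norm_num) h4; omega
    · exact hpn h4
  have hsq : IsSquare ((((-2) * (n:ℤ)) : ℤ) : ZMod p) := (legendreSym.eq_one_iff p hne0).mp hL
  obtain ⟨s, hs⟩ := hsq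
  -- construct γ with p ∣ n γ² + 2
  have hnne : ((n:ℕ) : ZMod p) ≠ 0 := by
    rw [Ne, ZMod.natCast_eq_zero_iff]
    exact hpn
  haveI : NeZero p := ⟨hp.pos.ne'⟩
  push_cast at hs
  obtain ⟨γ, hγ⟩ : ∃ γ : ℤ, (((n:ℤ)*γ^2 + 2 : ℤ) : ZMod p) = 0 := by
    refine ⟨((s * ((n:ℕ) : ZMod p)⁻¹).val : ℤ), ?_⟩
    have hval : (((s * ((n:ℕ) : ZMod p)⁻¹).val : ℕ) : ZMod p) = s * ((n:ℕ) : ZMod p)⁻¹ :=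
      ZMod.natCast_zmod_val _
    have hinv : ((n:ℕ) : ZMod p) * ((n:ℕ) : ZMod p)⁻¹ = 1 := mul_inv_cancel₀ hnne
    push_cast
    rw [hval]
    linear_combination (-((n:ℕ):ZMod p)*(((n:ℕ):ZMod p)⁻¹)^2) * hs
      + (-2*(((n:ℕ):ZMod p) * (((n:ℕ):ZMod p))⁻¹ + 1)) * hinv
  have hγdvd : (p:ℤ) ∣ ((n:ℤ)*γ^2 + 2) := by
    rwa [ZMod.intCast_zmod_eq_zero_iff_dvd] at hγ
  obtain ⟨δ, hδ⟩ := hγdvd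
  -- positivity of δ
  have hppos : (0:ℤ) < (p:ℤ) := by exact_mod_cast hp.pos
  have hnpos : (0:ℤ) < (n:ℤ) := by exact_mod_cast (by omega : 0 < n)
  have hδpos : 0 < δ := by nlinarith only [hδ, hppos, hnpos, sq_nonneg γ]
  -- β with p + 1 = n * β
  obtain ⟨β, hβ⟩ : ∃ β : ℕ, p + 1 = n * β := by
    have hd : n ∣ p + 1 := by
      apply Nat.dvd_of_mod_eq_zero
      rw [Nat.add_mod, hmodn, Nat.mod_eq_of_lt (by omega : 1 < n)]
      simp [Nat.sub_add_cancel (by omega : 1 ≤ n)]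
    exact hd
  have hβz : (n:ℤ) * (β:ℤ) = (p:ℤ) + 1 := by exact_mod_cast hβ.symm
  -- assemble the ternary form
  have hdetA : (n:ℤ)*(β:ℤ)*δ + 2*1*0*γ - (n:ℤ)*γ^2 - (β:ℤ)*0^2 - δ*1^2 = 2 := by
    linear_combination δ * hβz - hδ
  have hpos : ∀ x y z : ℤ, (x ≠ 0 ∨ y ≠ 0 ∨ z ≠ 0) →
      0 < (n:ℤ)*x^2 + (β:ℤ)*y^2 + δ*z^2 + 2*1*x*y + 2*0*x*z + 2*γ*y*z := by
    intro x y z hnz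
    have hI : (n:ℤ)*(p:ℤ)*((n:ℤ)*x^2 + (β:ℤ)*y^2 + δ*z^2 + 2*1*x*y + 2*0*x*z + 2*γ*y*z)
        = (p:ℤ)*((n:ℤ)*x + y)^2 + ((p:ℤ)*y + (n:ℤ)*γ*z)^2 + 2*(n:ℤ)*z^2 := by
      linear_combination ((p:ℤ)*y^2) * hβz - ((n:ℤ)*z^2) * hδ
    by_contra hF
    push_neg at hF
    have hnp : (0:ℤ) < (n:ℤ)*(p:ℤ) := by positivity
    have hle : (p:ℤ)*((n:ℤ)*x + y)^2 + ((p:ℤ)*y + (n:ℤ)*γ*z)^2 + 2*(n:ℤ)*z^2 ≤ 0 := by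
      rw [← hI]
      exact mul_nonpos_of_nonneg_of_nonpos hnp.le hF
    have t1 : (0:ℤ) ≤ (p:ℤ)*((n:ℤ)*x + y)^2 := by positivity
    have t2 : (0:ℤ) ≤ ((p:ℤ)*y + (n:ℤ)*γ*z)^2 := sq_nonneg _
    have t3 : (0:ℤ) ≤ 2*(n:ℤ)*z^2 := by positivity
    have hz : z = 0 := by
      have h30 : 2*(n:ℤ)*z^2 = 0 := by linarith
      have := pow_eq_zero_iff (n := 2) (by norm_num) |>.mp
        (by nlinarith only [h30, hnpos] : z^2 = 0)
      exact this
    subst hz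
    have hy : y = 0 := by
      have h20 : ((p:ℤ)*y + (n:ℤ)*γ*0)^2 = 0 := by linarith
      have h21 : (p:ℤ)*y = 0 := by
        have := pow_eq_zero_iff (n := 2) (by norm_num) |>.mp (by linarith [h20] : ((p:ℤ)*y + (n:ℤ)*γ*0)^2 = 0)
        linarith [this]
      rcases mul_eq_zero.mp h21 with h | h
      · exact absurd h hppos.ne'
      · exact h
    subst hy
    have hx : x = 0 := by
      have h10 : (p:ℤ)*((n:ℤ)*x + 0)^2 = 0 := by linarith
      have h11 : ((n:ℤ)*x + 0)^2 = 0 := by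
        rcases mul_eq_zero.mp h10 with h | h
        · exact absurd h hppos.ne'
        · exact h
      have h12 : (n:ℤ)*x + 0 = 0 := pow_eq_zero_iff (n := 2) (by norm_num) |>.mp h11
      rcases mul_eq_zero.mp (by linarith [h12] : (n:ℤ)*x = 0) with h | h
      · exact absurd h hnpos.ne'
      · exact h
    tauto
  have hrep : (n:ℤ)*1^2 + (β:ℤ)*0^2 + δ*0^2 + 2*1*1*0 + 2*0*1*0 + 2*γ*0*0 = (n:ℤ) := by ring
  exact ter_det2_rep (n:ℤ) (β:ℤ) δ 1 0 γ (n:ℤ) hpos hdetA 1 0 0 hrep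

theorem A3_A1_form_universal (m : ℕ) :
    ∃ a b c d : ℤ,
      a ^ 2 + a * b + b ^ 2 + a * c + b * c + c ^ 2 + d ^ 2 = m := by
  suffices h : ∀ m : ℕ, ∃ p q r d e : ℤ, p + q + r = 2*e ∧ p^2 + q^2 + r^2 + 2*d^2 = 2*(m:ℤ) by
    obtain ⟨p, q, r, d, e, hpar, hsum⟩ := h m
    refine ⟨e - r, e - p, e - q, d, ?_⟩
    have h2 : 2*((e-r)^2 + (e-r)*(e-p) + (e-p)^2 + (e-r)*(e-q) + (e-p)*(e-q) + (e-q)^2 + d^2)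
        = 2*(m:ℤ) := by
      linear_combination hsum + ((p+q+r) - 6*e)*hpar
    linarith [h2]
  intro m
  induction m using Nat.strong_induction_on with
  | _ m ih =>
    rcases Nat.eq_zero_or_pos m with rfl | hm
    · exact ⟨0, 0, 0, 0, 0, by ring, by norm_num⟩
    rcases Nat.even_or_odd m with he | ho
    · obtain ⟨t, rfl⟩ := he
      obtain ⟨p, q, r, d, e, h1, h2⟩ := ih t (by omega)
      refine ⟨p+q, p-q, 2*d, r, p+d, by ring, ?_⟩
      push_cast
      linear_combination 2*h2
    · obtain ⟨X, Y, Z, hXYZ⟩ := odd_rep m (Nat.odd_iff.mp ho)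
      exact ⟨X+Y, X-Y, 2*Z, 0, X+Z, by ring, by linear_combination (-2)*hXYZ⟩
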